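/- arXiv:2011.10403 — 3 statements merged into one kernel-verified Lean document; each statement's English description precedes it below -/
import Mathlib

section
/- No complete bridge graph that is a minimally connected prime graph can be generated from a minimal prime graph; that is, if Γ is a minimal prime graph and Γ* is a graph containing a vertex α whose deletion leaves an induced subgraph isomorphic to Γ, then Γ* is not isomorphic to any complete bridge graph B_{m,n} with m ≥ n > 1 or with m ∈ {1,2} and n = 1. -/
open SimpleGraph

def bridgeAdj (m n : ℕ) : (Fin m ⊕ Fin n) → (Fin m ⊕ Fin n) → Prop
  | Sum.inl i, Sum.inl j => i ≠ j
  | Sum.inr i, Sum.inr j => i ≠ j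
  | Sum.inl i, Sum.inr j => i.val = 0 ∧ j.val = 0
  | Sum.inr i, Sum.inl j => i.val = 0 ∧ j.val = 0

/-- The complete bridge graph `B_{m,n}`: two disjoint complete graphs on `m` and `n`
vertices respectively, joined by exactly one edge (the bridge). -/
def completeBridgeGraph (m n : ℕ) : SimpleGraph (Fin m ⊕ Fin n) where
  Adj := bridgeAdj m n
  symm := ⟨by
    rintro (a | a) (b | b) h <;> simp_all [bridgeAdj] <;> tauto⟩
  loopless := ⟨by
    rintro (a | a) h <;> simp_all [bridgeAdj]⟩

/-- A minimally connected prime graph (MCPG). -/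
def IsMCPG {V : Type} [Fintype V] (Γ : SimpleGraph V) : Prop :=
  2 ≤ Fintype.card V ∧ Γ.Connected ∧ Γᶜ.CliqueFree 3 ∧ Γᶜ.Colorable 3 ∧
    ∀ e ∈ Γ.edgeSet,
      ¬((Γ.deleteEdges {e}).Connected ∧ (Γ.deleteEdges {e})ᶜ.CliqueFree 3 ∧
        (Γ.deleteEdges {e})ᶜ.Colorable 3)

/-- A minimal prime graph (MPG). -/
def IsMPG {V : Type} [Fintype V] (Γ : SimpleGraph V) : Prop :=
  2 ≤ Fintype.card V ∧ Γ.Connected ∧ Γᶜ.CliqueFree 3 ∧ Γᶜ.Colorable 3 ∧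
    ∀ e ∈ Γ.edgeSet,
      ¬((Γ.deleteEdges {e})ᶜ.CliqueFree 3 ∧ (Γ.deleteEdges {e})ᶜ.Colorable 3)

/-- A possibly disconnected minimal prime graph (PDMPG). -/
def IsPDMPG {V : Type} [Fintype V] (Γ : SimpleGraph V) : Prop :=
  Γᶜ.CliqueFree 3 ∧ Γᶜ.Colorable 3 ∧
    ∀ e ∈ Γ.edgeSet,
      ¬((Γ.deleteEdges {e})ᶜ.CliqueFree 3 ∧ (Γ.deleteEdges {e})ᶜ.Colorable 3)

private lemma reach_const {V : Type*} {G : SimpleGraph V} (c : V → Bool)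
    (h : ∀ u v, G.Adj u v → c u = c v) {u v : V} (hr : G.Reachable u v) : c u = c v := by
  obtain ⟨w⟩ := hr
  induction w with
  | nil => rfl
  | cons ha _ ih => exact (h _ _ ha).trans ih

/-- No complete bridge graph that is a minimally connected prime graph can be generated
from a minimal prime graph: if `Γ` is a minimal prime graph and `Γ*` has exactly one more
vertex, containing a vertex `α` whose deletion leaves an induced subgraph isomorphic to
`Γ`, then `Γ*` is not isomorphic to any `B_{m,n}` with `m ≥ n > 1` or `m ∈ {1,2}`, `n = 1`. -/
theorem stmt4 {V W : Type} [Fintype V] [Fintype W]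
    (Γ : SimpleGraph V) (hΓ : IsMPG Γ)
    (Γstar : SimpleGraph W) (hcard : Fintype.card W = Fintype.card V + 1)
    (α : W) (hgen : Nonempty ((Γstar.induce {w | w ≠ α}) ≃g Γ))
    (m n : ℕ) (hmn : (n ≤ m ∧ 1 < n) ∨ ((m = 1 ∨ m = 2) ∧ n = 1)) :
    ¬ Nonempty (Γstar ≃g completeBridgeGraph m n) := by
  rintro ⟨f⟩
  obtain ⟨g⟩ := hgen
  obtain ⟨hcardV, hconn, hcf, hcol, hmin⟩ := hΓ
  have hcW : Fintype.card W = m + n := by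
    rw [Fintype.card_congr f.toEquiv]; simp
  rcases hmn with ⟨hnm, hn⟩ | ⟨hm, hn⟩
  · -- main case : m ≥ n ≥ 2
    have hm2 : 2 ≤ m := le_trans hn hnm
    set z0m : Fin m := ⟨0, by omega⟩ with hz0m
    set z1m : Fin m := ⟨1, by omega⟩ with hz1m
    set z0n : Fin n := ⟨0, by omega⟩ with hz0n
    set z1n : Fin n := ⟨1, by omega⟩ with hz1n
    -- adjacency transfer
    have hadj : ∀ u v : {w : W // w ≠ α},
        (Γstar.induce {w | w ≠ α}).Adj u v ↔ (completeBridgeGraph m n).Adj (f u.1) (f v.1) := by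
      intro u v
      exact Iff.symm f.map_adj_iff
    -- Case analysis on f α
    by_cases h1 : f α = Sum.inl z0m
    · -- Γ would be disconnected
      have hw1 : f.symm (Sum.inl z1m) ≠ α := by
        intro h
        have := f.apply_symm_apply (Sum.inl z1m)
        rw [h, h1] at this
        simp [hz0m, hz1m, Fin.ext_iff] at this
      have hw2 : f.symm (Sum.inr z0n) ≠ α := by
        intro h
        have := f.apply_symm_apply (Sum.inr z0n)
        rw [h, h1] at this
        simp at this
      set c : {w : W // w ≠ α} → Bool := fun w => (f w.1).isLeft with hc
      have hpres : ∀ u v : {w : W // w ≠ α},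
          (Γstar.induce {w | w ≠ α}).Adj u v → c u = c v := by
        intro u v huv
        rw [hadj] at huv
        rcases hfu : f u.1 with i | i <;> rcases hfv : f v.1 with j | j
        · simp [hc, hfu, hfv]
        · exfalso
          rw [hfu, hfv] at huv
          obtain ⟨hi, hj⟩ := huv
          apply u.2
          apply f.injective
          rw [hfu, h1]
          congr 1
          exact Fin.ext hi
        · exfalso
          rw [hfu, hfv] at huv
          obtain ⟨hi, hj⟩ := huv
          apply v.2
          apply f.injective
          rw [hfv, h1]
          congr 1
          exact Fin.ext hj
        · simp [hc, hfu, hfv]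
      have hreach : ((Γstar.induce {w | w ≠ α})).Reachable
          ⟨f.symm (Sum.inl z1m), hw1⟩ ⟨f.symm (Sum.inr z0n), hw2⟩ := by
        have := hconn.preconnected (g ⟨f.symm (Sum.inl z1m), hw1⟩) (g ⟨f.symm (Sum.inr z0n), hw2⟩)
        have h2 := this.map g.symm.toHom
        simpa using h2
      have := reach_const c hpres hreach
      simp [hc] at this
    by_cases h2 : f α = Sum.inr z0n
    · have hw1 : f.symm (Sum.inl z0m) ≠ α := by
        intro h
        have := f.apply_symm_apply (Sum.inl z0m)
        rw [h, h2] at this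
        simp at this
      have hw2 : f.symm (Sum.inr z1n) ≠ α := by
        intro h
        have := f.apply_symm_apply (Sum.inr z1n)
        rw [h, h2] at this
        simp [hz0n, hz1n, Fin.ext_iff] at this
      set c : {w : W // w ≠ α} → Bool := fun w => (f w.1).isLeft with hc
      have hpres : ∀ u v : {w : W // w ≠ α},
          (Γstar.induce {w | w ≠ α}).Adj u v → c u = c v := by
        intro u v huv
        rw [hadj] at huv
        rcases hfu : f u.1 with i | i <;> rcases hfv : f v.1 with j | j
        · simp [hc, hfu, hfv]
        · exfalso
          rw [hfu, hfv] at huv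
          obtain ⟨hi, hj⟩ := huv
          apply v.2
          apply f.injective
          rw [hfv, h2]
          congr 1
          exact Fin.ext hj
        · exfalso
          rw [hfu, hfv] at huv
          obtain ⟨hi, hj⟩ := huv
          apply u.2
          apply f.injective
          rw [hfu, h2]
          congr 1
          exact Fin.ext hi
        · simp [hc, hfu, hfv]
      have hreach : ((Γstar.induce {w | w ≠ α})).Reachable
          ⟨f.symm (Sum.inl z0m), hw1⟩ ⟨f.symm (Sum.inr z1n), hw2⟩ := by
        have := hconn.preconnected (g ⟨f.symm (Sum.inl z0m), hw1⟩) (g ⟨f.symm (Sum.inr z1n), hw2⟩)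
        have h2' := this.map g.symm.toHom
        simpa using h2'
      have := reach_const c hpres hreach
      simp [hc] at this
    · -- bridge edge case
      have ha' : f.symm (Sum.inl z0m) ≠ α := by
        intro h
        apply h1
        rw [← h, f.apply_symm_apply]
      have hb' : f.symm (Sum.inr z0n) ≠ α := by
        intro h
        apply h2
        rw [← h, f.apply_symm_apply]
      set aa : {w : W // w ≠ α} := ⟨f.symm (Sum.inl z0m), ha'⟩ with haa
      set bb : {w : W // w ≠ α} := ⟨f.symm (Sum.inr z0n), hb'⟩ with hbb
      have hedge : Γ.Adj (g aa) (g bb) := by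
        rw [g.map_adj_iff, hadj]
        simp only [haa, hbb, f.apply_symm_apply]
        exact ⟨rfl, rfl⟩
      refine hmin s(g aa, g bb) hedge ?_
      -- 2-coloring of the complement of deleteEdges
      set c : V → Bool := fun v => (f (g.symm v).1).isLeft with hc
      have hcval : ∀ u v : V, ((Γ.deleteEdges {s(g aa, g bb)})ᶜ).Adj u v → c u ≠ c v := by
        intro u v huv hcc
        rw [SimpleGraph.compl_adj] at huv
        obtain ⟨hne, hnadj⟩ := huv
        rw [SimpleGraph.deleteEdges_adj] at hnadj
        push_neg at hnadj
        have hgu : g (g.symm u) = u := g.apply_symm_apply u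
        have hgv : g (g.symm v) = v := g.apply_symm_apply v
        have hAdjiff : Γ.Adj u v ↔
            (completeBridgeGraph m n).Adj (f (g.symm u).1) (f (g.symm v).1) := by
          rw [← hadj, ← hgu, ← hgv]
          rw [g.map_adj_iff]
          rw [g.symm_apply_apply, g.symm_apply_apply]
        have hxy : (g.symm u) ≠ (g.symm v) := by
          intro h; apply hne; rw [← hgu, ← hgv, h]
        rcases hfu : f (g.symm u).1 with i | i <;> rcases hfv : f (g.symm v).1 with j | j
        · -- both left : Γ.Adj holds, so edge must equal the bridge, contradiction
          have hijne : i ≠ j := by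
            intro h
            apply hxy
            apply Subtype.ext
            apply f.injective
            rw [hfu, hfv, h]
          have hAdj : Γ.Adj u v := by
            rw [hAdjiff, hfu, hfv]; exact hijne
          have heq := hnadj hAdj
          simp only [Set.mem_singleton_iff] at heq
          rw [Sym2.eq_iff] at heq
          rcases heq with ⟨hu1, hv1⟩ | ⟨hu1, hv1⟩
          · have : (g.symm v) = bb := by
              apply g.injective; rw [hgv, hv1]
            rw [this] at hfv
            simp [hbb, f.apply_symm_apply] at hfv
          · have : (g.symm u) = bb := by
              apply g.injective; rw [hgu, hu1]
            rw [this] at hfu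
            simp [hbb, f.apply_symm_apply] at hfu
        · -- cross : colors differ
          rw [hc] at hcc
          simp only [hfu, hfv] at hcc
          simp at hcc
        · rw [hc] at hcc
          simp only [hfu, hfv] at hcc
          simp at hcc
        · have hijne : i ≠ j := by
            intro h
            apply hxy
            apply Subtype.ext
            apply f.injective
            rw [hfu, hfv, h]
          have hAdj : Γ.Adj u v := by
            rw [hAdjiff, hfu, hfv]; exact hijne
          have heq := hnadj hAdj
          simp only [Set.mem_singleton_iff] at heq
          rw [Sym2.eq_iff] at heq
          rcases heq with ⟨hu1, hv1⟩ | ⟨hu1, hv1⟩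
          · have : (g.symm u) = aa := by
              apply g.injective; rw [hgu, hu1]
            rw [this] at hfu
            simp [haa, f.apply_symm_apply] at hfu
          · have : (g.symm v) = aa := by
              apply g.injective; rw [hgv, hv1]
            rw [this] at hfv
            simp [haa, f.apply_symm_apply] at hfv
      have hcolor2 : ((Γ.deleteEdges {s(g aa, g bb)})ᶜ).Colorable 2 := by
        have C : ((Γ.deleteEdges {s(g aa, g bb)})ᶜ).Coloring Bool :=
          SimpleGraph.Coloring.mk c (fun {u v} h => hcval u v h)
        have := C.colorable
        simpa using this
      exact ⟨hcolor2.cliqueFree (by omega), hcolor2.mono (by omega)⟩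
  · -- degenerate cases
    subst hn
    rcases hm with rfl | rfl
    · omega
    · have hV2 : Fintype.card V = 2 := by omega
      have hne : Nonempty V := Fintype.card_pos_iff.mp (by omega)
      obtain ⟨u, v, huv⟩ := Fintype.exists_pair_of_one_lt_card (by omega : 1 < Fintype.card V)
      obtain ⟨w⟩ := hconn.preconnected u v
      cases w with
      | nil => exact huv rfl
      | @cons _ x _ hax p =>
        refine hmin s(u, x) hax ?_
        have hcolor2 : ((Γ.deleteEdges {s(u, x)})ᶜ).Colorable 2 := by
          have := ((Γ.deleteEdges {s(u, x)})ᶜ).colorable_of_fintype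
          rwa [hV2] at this
        exact ⟨hcolor2.cliqueFree (by omega), hcolor2.mono (by omega)⟩
end

section
/- Let Γ be a finite simple graph whose complement is triangle-free and 3-colorable, and suppose the diameter of Γ is exactly 3. Then the complement of Γ is 2-colorable (bipartite). -/
open SimpleGraph

/-- If the complement of `Γ` is triangle-free and 3-colorable and the diameter of `Γ` is
exactly 3, then the complement of `Γ` is 2-colorable. -/
theorem stmt7 {V : Type} [Fintype V] (Γ : SimpleGraph V)
    (htf : Γᶜ.CliqueFree 3) (hcol : Γᶜ.Colorable 3) (hdiam : Γ.diam = 3) :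
    Γᶜ.Colorable 2 := by
  classical
  have hnt : Nontrivial V := Γ.nontrivial_of_diam_ne_zero (by omega)
  have : Nonempty V := inferInstance
  obtain ⟨u, v, huv⟩ := Γ.exists_dist_eq_diam
  rw [hdiam] at huv
  have hne : u ≠ v := by
    intro h; subst h; simp [Γ.dist_self] at huv
  have hnadj : ¬Γ.Adj u v := by
    intro h
    have := Γ.dist_le h.toWalk
    simp at this; omega
  have hcadj : Γᶜ.Adj u v := by simp [compl_adj, hne, hnadj]
  have hmid : ∀ w, ¬(Γ.Adj u w ∧ Γ.Adj w v) := by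
    rintro w ⟨h1, h2⟩
    have := Γ.dist_le (h1.toWalk.append h2.toWalk)
    simp at this; omega
  -- exactly-one: any w ≠ u is Γᶜ-adjacent to u or not Γᶜ-adjacent to v etc.
  refine ⟨Coloring.mk (fun w => if Γᶜ.Adj v w then 0 else 1) ?_⟩
  intro a b hab heq
  by_cases h1 : Γᶜ.Adj v a <;> by_cases h2 : Γᶜ.Adj v b
  · exact htf _ (is3Clique_triple_iff.mpr ⟨h1, h2, hab⟩)
  · simp [h1, h2] at heq
  · simp [h1, h2] at heq
  · -- neither adjacent to v in complement
    have hav : a ≠ v := by rintro rfl; exact h2 hab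
    have hbv : b ≠ v := by rintro rfl; exact h1 hab.symm
    have hga : Γ.Adj v a := by
      by_contra h; exact h1 ((compl_adj Γ v a).mpr ⟨hav.symm, h⟩)
    have hgb : Γ.Adj v b := by
      by_contra h; exact h2 ((compl_adj Γ v b).mpr ⟨hbv.symm, h⟩)
    have hau : a ≠ u := by rintro rfl; exact h1 hcadj.symm
    have hbu : b ≠ u := by rintro rfl; exact h2 hcadj.symm
    have hca : Γᶜ.Adj u a := by
      by_contra h
      have : Γ.Adj u a := by
        by_contra h'; exact h ((compl_adj Γ u a).mpr ⟨hau.symm, h'⟩)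
      exact hmid a ⟨this, hga.symm⟩
    have hcb : Γᶜ.Adj u b := by
      by_contra h
      have : Γ.Adj u b := by
        by_contra h'; exact h ((compl_adj Γ u b).mpr ⟨hbu.symm, h'⟩)
      exact hmid b ⟨this, hgb.symm⟩
    exact htf _ (is3Clique_triple_iff.mpr ⟨hca, hcb, hab⟩)
end

section
/- If Γ is a complete bridge graph that is a minimally connected prime graph (i.e., Γ ≅ B_{m,n} with m ≥ n > 1 or m ∈ {1,2}, n = 1) and Γ is self-complementary, then Γ is isomorphic to B_{2,2}. -/
open SimpleGraph

def isoCompl {V W : Type*} {G : SimpleGraph V} {H : SimpleGraph W} (e : G ≃g H) : Gᶜ ≃g Hᶜ where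
  toEquiv := e.toEquiv
  map_rel_iff' := by
    intro a b
    simp only [SimpleGraph.compl_adj, Equiv.coe_fn_mk]
    constructor
    · rintro ⟨h1, h2⟩
      exact ⟨fun h => h1 (by rw [h]), fun h => h2 (e.map_adj_iff.mpr h)⟩
    · rintro ⟨h1, h2⟩
      exact ⟨fun h => h1 (e.toEquiv.injective h), fun h => h2 (e.map_adj_iff.mp h)⟩

lemma compl_triangle_aux {m n : ℕ} (x y z : Fin m ⊕ Fin n)
    (hxy : (completeBridgeGraph m n)ᶜ.Adj x y)
    (hyz : (completeBridgeGraph m n)ᶜ.Adj y z)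
    (hxz : (completeBridgeGraph m n)ᶜ.Adj x z) : False := by
  rw [SimpleGraph.compl_adj] at hxy hyz hxz
  rcases x with i|i <;> rcases y with j|j <;> rcases z with k|k <;>
    simp_all [completeBridgeGraph, bridgeAdj]

lemma no_self_compl_big {m n : ℕ} (hm : 3 ≤ m)
    (g : completeBridgeGraph m n ≃g (completeBridgeGraph m n)ᶜ) : False := by
  have h01 : (completeBridgeGraph m n).Adj (Sum.inl ⟨0, by omega⟩) (Sum.inl ⟨1, by omega⟩) := by
    intro h
    simp [Fin.ext_iff] at h
  have h12 : (completeBridgeGraph m n).Adj (Sum.inl ⟨1, by omega⟩) (Sum.inl ⟨2, by omega⟩) := by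
    intro h
    simp [Fin.ext_iff] at h
  have h02 : (completeBridgeGraph m n).Adj (Sum.inl ⟨0, by omega⟩) (Sum.inl ⟨2, by omega⟩) := by
    intro h
    simp [Fin.ext_iff] at h
  exact compl_triangle_aux _ _ _ (g.map_adj_iff.mpr h01) (g.map_adj_iff.mpr h12)
    (g.map_adj_iff.mpr h02)

lemma no_self_compl_11 (g : completeBridgeGraph 1 1 ≃g (completeBridgeGraph 1 1)ᶜ) : False := by
  have h : (completeBridgeGraph 1 1).Adj (Sum.inl 0) (Sum.inr 0) := ⟨rfl, rfl⟩
  have h2 := g.map_adj_iff.mpr h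
  rw [SimpleGraph.compl_adj] at h2
  obtain ⟨hne, hna⟩ := h2
  rcases hx : g (Sum.inl 0) with i|i <;> rcases hy : g (Sum.inr 0) with j|j <;>
    rw [hx, hy] at hne hna <;>
    simp_all [completeBridgeGraph, bridgeAdj, Fin.ext_iff]

lemma b21_adj {u v : Fin 2 ⊕ Fin 1} (h : (completeBridgeGraph 2 1)ᶜ.Adj u v) :
    (u = Sum.inl 1 ∧ v = Sum.inr 0) ∨ (u = Sum.inr 0 ∧ v = Sum.inl 1) := by
  rw [SimpleGraph.compl_adj] at h
  rcases u with i|i <;> rcases v with j|j <;> fin_cases i <;> fin_cases j <;>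
    simp_all [completeBridgeGraph, bridgeAdj]

lemma no_self_compl_21 (g : completeBridgeGraph 2 1 ≃g (completeBridgeGraph 2 1)ᶜ) : False := by
  have h1 : (completeBridgeGraph 2 1).Adj (Sum.inl 0) (Sum.inl 1) := by
    intro h
    simp at h
  have h2 : (completeBridgeGraph 2 1).Adj (Sum.inl 0) (Sum.inr 0) := ⟨rfl, rfl⟩
  have c1 := b21_adj (g.map_adj_iff.mpr h1)
  have c2 := b21_adj (g.map_adj_iff.mpr h2)
  have hinj : g (Sum.inl 1) ≠ g (Sum.inr 0) := fun h => by
    have := g.toEquiv.injective h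
    simp at this
  rcases c1 with ⟨a1, b1⟩ | ⟨a1, b1⟩ <;> rcases c2 with ⟨a2, b2⟩ | ⟨a2, b2⟩ <;>
    simp_all

/-- If `Γ` is a complete bridge graph that is a minimally connected prime graph and `Γ`
is self-complementary, then `Γ` is isomorphic to `B_{2,2}`. -/
theorem stmt12 {V : Type} [Fintype V] (Γ : SimpleGraph V) (m n : ℕ)
    (hmn : (n ≤ m ∧ 1 < n) ∨ ((m = 1 ∨ m = 2) ∧ n = 1))
    (hiso : Nonempty (Γ ≃g completeBridgeGraph m n))
    (hsc : Nonempty (Γ ≃g Γᶜ)) :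
    Nonempty (Γ ≃g completeBridgeGraph 2 2) := by
  obtain ⟨e⟩ := hiso
  obtain ⟨f⟩ := hsc
  have g : completeBridgeGraph m n ≃g (completeBridgeGraph m n)ᶜ :=
    (e.symm.trans f).trans (isoCompl e)
  have hm2 : m ≤ 2 := by
    by_contra hm
    exact no_self_compl_big (by omega) g
  have : m = 2 ∧ n = 2 := by
    rcases hmn with ⟨h1, h2⟩ | ⟨h1, h2⟩
    · omega
    · subst h2
      rcases h1 with rfl | rfl
      · exact (no_self_compl_11 g).elim
      · exact (no_self_compl_21 g).elim
  obtain ⟨rfl, rfl⟩ := this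
  exact ⟨e⟩
end
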